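/- If f : ℝ^n × ℝ^m → ℝ is jointly convex and the matrix (A B) formed by concatenating the columns of the p×n matrix A and the p×m matrix B has linearly independent columns (i.e., the map (x,y) ↦ A x + B y is injective), then for every ρ > 0 the function (x,y) ↦ f(x,y) + ρ ‖A x + B y - b‖₂² is strongly convex on ℝ^n × ℝ^m with constant 2ρ σ, where σ > 0 is the smallest eigenvalue of the Gram matrix (A B)ᵀ(A B). -/

import Mathlib

def StrongConvexOnSet {E : Type*} [NormedAddCommGroup E] [NormedSpace ℝ E]
    (s : Set E) (a : ℝ) (f : E → ℝ) : Prop :=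
  ∀ x ∈ s, ∀ y ∈ s, ∀ t : ℝ, 0 ≤ t → t ≤ 1 →
    f (t • x + (1 - t) • y) ≤ t * f x + (1 - t) * f y - a / 2 * (t * (1 - t)) * ‖y - x‖ ^ 2

open Matrix

open scoped InnerProductSpace RealInnerProductSpace

-- quadratic identity
lemma quad_id {E : Type*} [NormedAddCommGroup E] [InnerProductSpace ℝ E]
    (u v : E) (t : ℝ) :
    ‖t • u + (1 - t) • v‖ ^ 2
      = t * ‖u‖ ^ 2 + (1 - t) * ‖v‖ ^ 2 - t * (1 - t) * ‖u - v‖ ^ 2 := by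
  have h1 := norm_add_sq_real (t • u) ((1 - t) • v)
  have h2 := norm_sub_sq_real u v
  have h3 : ⟪t • u, (1 - t) • v⟫_ℝ = t * (1 - t) * ⟪u, v⟫_ℝ := by
    rw [real_inner_smul_left, real_inner_smul_right]; ring
  have h4 : ‖t • u‖ ^ 2 = t ^ 2 * ‖u‖ ^ 2 := by
    rw [norm_smul]; rw [Real.norm_eq_abs]; rw [mul_pow, sq_abs]
  have h5 : ‖(1 - t) • v‖ ^ 2 = (1 - t) ^ 2 * ‖v‖ ^ 2 := by
    rw [norm_smul]; rw [Real.norm_eq_abs]; rw [mul_pow, sq_abs]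
  nlinarith [h1, h2, h3, h4, h5]

-- eigenvalue lower bound
lemma gram_lower {k : Type*} [Fintype k] [DecidableEq k]
    (G : Matrix k k ℝ) (hG : G.IsHermitian) (σ : ℝ)
    (hσ : ∀ i, σ ≤ hG.eigenvalues i) (w : EuclideanSpace ℝ k) :
    σ * ‖w‖ ^ 2 ≤ ⟪w, Matrix.toEuclideanLin G w⟫_ℝ := by
  set b := hG.eigenvectorBasis
  have hsymm : (Matrix.toEuclideanLin G).IsSymmetric :=
    Matrix.isHermitian_iff_isSymmetric.mp hG
  have happ : ∀ j, Matrix.toEuclideanLin G (b j) = hG.eigenvalues j • b j := by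
    intro j
    apply (WithLp.equiv 2 _).injective
    simpa [Matrix.toEuclideanLin_apply] using hG.mulVec_eigenvectorBasis j
  have key : ⟪w, Matrix.toEuclideanLin G w⟫_ℝ
      = ∑ i, hG.eigenvalues i * (⟪b i, w⟫_ℝ * ⟪b i, w⟫_ℝ) := by
    rw [← b.sum_inner_mul_inner w (Matrix.toEuclideanLin G w)]
    congr 1; ext i
    have : ⟪b i, Matrix.toEuclideanLin G w⟫_ℝ = hG.eigenvalues i * ⟪b i, w⟫_ℝ := by
      rw [← hsymm (b i) w, happ i, real_inner_smul_left]
    rw [this, real_inner_comm w (b i)]; ring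
  have hnorm : ‖w‖ ^ 2 = ∑ i, ⟪b i, w⟫_ℝ * ⟪b i, w⟫_ℝ := by
    rw [← real_inner_self_eq_norm_sq, ← b.sum_inner_mul_inner w w]
    congr 1; ext i; rw [real_inner_comm w (b i)]
  rw [key, hnorm, Finset.mul_sum]
  apply Finset.sum_le_sum
  intro i _
  exact mul_le_mul_of_nonneg_right (hσ i) (mul_self_nonneg _)

lemma gram_norm_eq {k l : Type*} [Fintype k] [Fintype l] [DecidableEq k] [DecidableEq l]
    (M : Matrix l k ℝ) (w : EuclideanSpace ℝ k) :
    ⟪w, Matrix.toEuclideanLin (Mᵀ * M) w⟫_ℝ = ‖Matrix.toEuclideanLin M w‖ ^ 2 := by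
  have hT : Mᵀ = Mᴴ := (Matrix.conjTranspose_eq_transpose_of_trivial M).symm
  have hcomp : Matrix.toEuclideanLin (Mᵀ * M) w
      = Matrix.toEuclideanLin Mᵀ (Matrix.toEuclideanLin M w) := by
    apply (WithLp.equiv 2 _).injective
    simp [Matrix.toEuclideanLin_apply, Matrix.mulVec_mulVec]
  rw [hcomp, hT, Matrix.toEuclideanLin_conjTranspose_eq_adjoint,
    LinearMap.adjoint_inner_right, real_inner_self_eq_norm_sq]

/-- Quadratic penalization of the linear coupling constraints: if `f` is jointly convex
and the concatenated matrix `M = (A B)` has linearly independent columns, then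
`z ↦ f(z) + ρ ‖M z - b‖₂²` is strongly convex with constant `2ρσ`, where `σ > 0` is the
smallest eigenvalue of the Gram matrix `Mᵀ M`. -/
theorem penalized_strongly_convex {n m p : ℕ}
    (A : Matrix (Fin p) (Fin n) ℝ) (B : Matrix (Fin p) (Fin m) ℝ)
    (b : EuclideanSpace ℝ (Fin p))
    (f : EuclideanSpace ℝ (Fin n ⊕ Fin m) → ℝ)
    (hf : ConvexOn ℝ Set.univ f)
    (M : Matrix (Fin p) (Fin n ⊕ Fin m) ℝ) (hM : M = Matrix.fromCols A B)
    (hinj : Function.Injective (Matrix.toEuclideanLin M))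
    (hG : (Mᵀ * M).IsHermitian)
    (σ : ℝ) (hσ : IsLeast (Set.range hG.eigenvalues) σ) (hσpos : 0 < σ)
    (ρ : ℝ) (hρ : 0 < ρ) :
    StrongConvexOnSet Set.univ (2 * ρ * σ)
      (fun z => f z + ρ * ‖Matrix.toEuclideanLin M z - b‖ ^ 2) := by
  intro x _ y _ t ht0 ht1
  set L := Matrix.toEuclideanLin M with hL
  simp only
  have hcomb : L (t • x + (1 - t) • y) - b
      = t • (L x - b) + (1 - t) • (L y - b) := by
    rw [map_add, L.map_smul, L.map_smul]; module
  have hquad := quad_id (L x - b) (L y - b) t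
  have hlow : σ * ‖y - x‖ ^ 2 ≤ ‖(L x - b) - (L y - b)‖ ^ 2 := by
    have h1 : (L x - b) - (L y - b) = L (x - y) := by rw [map_sub]; abel
    have h2 : ∀ i, σ ≤ hG.eigenvalues i := fun i => hσ.2 ⟨i, rfl⟩
    have h3 := gram_lower (Mᵀ * M) hG σ h2 (x - y)
    rw [gram_norm_eq] at h3
    rw [h1, norm_sub_rev y x]
    exact h3
  have hconv : f (t • x + (1 - t) • y) ≤ t * f x + (1 - t) * f y := by
    simpa using hf.2 (Set.mem_univ x) (Set.mem_univ y) ht0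
      (show (0:ℝ) ≤ 1 - t by linarith) (by ring)
  rw [hcomb, hquad]
  nlinarith [mul_nonneg (mul_nonneg ht0 (by linarith : (0:ℝ) ≤ 1 - t)) hρ.le,
    mul_le_mul_of_nonneg_left hlow
      (mul_nonneg (mul_nonneg ht0 (by linarith : (0:ℝ) ≤ 1 - t)) hρ.le)]
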